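/- The NDMES rule satisfies S-STAY: cumulative shares are non-decreasing, and when a contributional player i arrives (v(Sᵢ) > v(Sᵢ∖{i})), every earlier player j with v(Sᵢ) > v(Sᵢ∖{j}) receives a strictly positive additional amount at step i. -/

import Mathlib

variable {α : Type*} [DecidableEq α]

/-- The set of players arrived up to and including step `t`, under arrival order `π`. -/
def prefixSet {n : ℕ} (π : Fin n → α) (t : Fin n) : Finset α :=
  (Finset.Iic t).image π

/-- Player `j` is a dummy player of the sub-game restricted to `S`. -/
def IsDummy (v : Finset α → ℝ) (S : Finset α) (j : α) : Prop :=
  ∀ T ⊆ S, v (insert j T) = v T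

open Classical in
/-- The non-dummy players of the sub-game restricted to `S`. -/
noncomputable def nonDummies (v : Finset α → ℝ) (S : Finset α) : Finset α :=
  S.filter (fun j => ¬ IsDummy v S j)

/-- Amount NDMES gives player `p` at step `t`: the marginal contribution of the new
arrival `π t` is split equally among the non-dummy players of the current prefix. -/
noncomputable def ndmesStep {n : ℕ} (v : Finset α → ℝ) (π : Fin n → α) (t : Fin n) (p : α) : ℝ :=
  if p ∈ nonDummies v (prefixSet π t) then
    (v (prefixSet π t) - v ((prefixSet π t).erase (π t))) /
      ((nonDummies v (prefixSet π t)).card : ℝ)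
  else 0

/-- Cumulative NDMES share of player `p` after step `t`. -/
noncomputable def ndmesCum {n : ℕ} (v : Finset α → ℝ) (π : Fin n → α) (p : α) (t : Fin n) : ℝ :=
  ∑ s ∈ Finset.Iic t, ndmesStep v π s p

/-- The NDMES rule satisfies S-STAY: cumulative shares are non-decreasing, and when a
contributional player `π t` arrives, every earlier player `π s` with
`v (prefixSet π t) > v (prefixSet π t \ {π s})` receives a strictly positive additional
amount, i.e. her cumulative share at step `t` strictly exceeds her cumulative
share at her own arrival step `s`. -/
lemma ndmesStep_nonneg {n : ℕ} (v : Finset α → ℝ) (π : Fin n → α)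
    (hmono : ∀ S T : Finset α, S ⊆ T → v S ≤ v T) (t : Fin n) (p : α) :
    0 ≤ ndmesStep v π t p := by
  unfold ndmesStep
  split
  · exact div_nonneg (sub_nonneg.2 (hmono _ _ (Finset.erase_subset _ _))) (Nat.cast_nonneg _)
  · exact le_refl 0

theorem ndmes_sstay {n : ℕ} (v : Finset α → ℝ) (π : Fin n → α)
    (hinj : Function.Injective π)
    (hnorm : v ∅ = 0)
    (hmono : ∀ S T : Finset α, S ⊆ T → v S ≤ v T) :
    (∀ (p : α) (s t : Fin n), s ≤ t → ndmesCum v π p s ≤ ndmesCum v π p t) ∧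
    (∀ s t : Fin n, s < t →
      v (prefixSet π t) > v ((prefixSet π t).erase (π t)) →
      v (prefixSet π t) > v ((prefixSet π t).erase (π s)) →
      ndmesCum v π (π s) t > ndmesCum v π (π s) s) := by
  have hmonocum : ∀ (p : α) (s t : Fin n), s ≤ t → ndmesCum v π p s ≤ ndmesCum v π p t := by
    intro p s t hst
    apply Finset.sum_le_sum_of_subset_of_nonneg
    · exact Finset.Iic_subset_Iic.2 hst
    · intro i _ _
      exact ndmesStep_nonneg v π hmono i p
  refine ⟨hmonocum, ?_⟩
  intro s t hst hmt hms
  have hmem : π s ∈ nonDummies v (prefixSet π t) := by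
    have hps : π s ∈ prefixSet π t := by
      exact Finset.mem_image.2 ⟨s, Finset.mem_Iic.2 hst.le, rfl⟩
    simp only [nonDummies, Finset.mem_filter]
    refine ⟨hps, ?_⟩
    intro hd
    have := hd ((prefixSet π t).erase (π s)) (Finset.erase_subset _ _)
    rw [Finset.insert_erase hps] at this
    exact absurd this (by linarith)
  have hstep : 0 < ndmesStep v π t (π s) := by
    unfold ndmesStep
    rw [if_pos hmem]
    apply div_pos (by linarith)
    exact_mod_cast Finset.card_pos.2 ⟨π s, hmem⟩
  have hkey : ndmesCum v π (π s) s + ndmesStep v π t (π s) ≤ ndmesCum v π (π s) t := by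
    have htnot : t ∉ Finset.Iic s := by
      simp [Finset.mem_Iic, not_le, hst]
    have hsub : insert t (Finset.Iic s) ⊆ Finset.Iic t := by
      intro x hx
      rcases Finset.mem_insert.1 hx with rfl | hx
      · exact Finset.mem_Iic.2 le_rfl
      · exact Finset.mem_Iic.2 ((Finset.mem_Iic.1 hx).trans hst.le)
    calc ndmesCum v π (π s) s + ndmesStep v π t (π s)
        = ∑ i ∈ insert t (Finset.Iic s), ndmesStep v π i (π s) := by
          rw [Finset.sum_insert htnot, ndmesCum]; ring
      _ ≤ ndmesCum v π (π s) t := by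
          apply Finset.sum_le_sum_of_subset_of_nonneg hsub
          intro i _ _
          exact ndmesStep_nonneg v π hmono i (π s)
  linarith
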